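/- arXiv:1011.2897 — 3 statements merged into one kernel-verified Lean document; each statement's English description precedes it below -/
import Mathlib

section
/- For any nonnegative integer n and all real (or complex) x, y, the sum over k from 0 to n of binom(2n, 2k) * B_{2k}(x) * y^(2n-2k) equals (1/2) * (B_{2n}(x+y) + B_{2n}(x-y)), where B_m denotes the m-th Bernoulli polynomial. -/
open Polynomial Finset

theorem bernoulli_aeval_expand (m : ℕ) (z : ℝ) :
    Polynomial.aeval z (Polynomial.bernoulli m) =
      ∑ i ∈ Finset.range (m + 1),
        ((_root_.bernoulli i : ℚ) : ℝ) * (m.choose i : ℝ) * z ^ (m - i) := by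
  simp [Polynomial.bernoulli, aeval_monomial, mul_assoc]

theorem bernoulli_aeval_add (m : ℕ) (a b : ℝ) :
    Polynomial.aeval (a + b) (Polynomial.bernoulli m) =
      ∑ k ∈ Finset.range (m + 1),
        (m.choose k : ℝ) * Polynomial.aeval a (Polynomial.bernoulli k) * b ^ (m - k) := by
  calc Polynomial.aeval (a + b) (Polynomial.bernoulli m)
      = ∑ i ∈ Finset.range (m + 1), ∑ j ∈ Finset.range (m + 1 - i),
          ((_root_.bernoulli i : ℚ) : ℝ) * (m.choose i : ℝ) * ((m - i).choose j : ℝ)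
            * a ^ j * b ^ (m - i - j) := by
        rw [bernoulli_aeval_expand]
        refine Finset.sum_congr rfl fun i hi => ?_
        rw [add_pow, Finset.mul_sum]
        have : m - i + 1 = m + 1 - i := by
          have := Finset.mem_range.mp hi
          omega
        rw [← this]
        refine Finset.sum_congr rfl fun j hj => ?_
        ring
    _ = ∑ i ∈ Finset.range (m + 1), ∑ k ∈ Finset.Ico i (m + 1),
          ((_root_.bernoulli i : ℚ) : ℝ) * (m.choose i : ℝ) * ((m - i).choose (k - i) : ℝ)
            * a ^ (k - i) * b ^ (m - k) := by
        refine Finset.sum_congr rfl fun i _ => ?_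
        rw [Finset.sum_Ico_eq_sum_range]
        refine Finset.sum_congr rfl fun j _ => ?_
        simp [Nat.add_sub_cancel_left, Nat.sub_sub]
    _ = ∑ k ∈ Finset.range (m + 1), ∑ i ∈ Finset.range (k + 1),
          ((_root_.bernoulli i : ℚ) : ℝ) * (m.choose i : ℝ) * ((m - i).choose (k - i) : ℝ)
            * a ^ (k - i) * b ^ (m - k) := by
        rw [Finset.range_eq_Ico, Finset.sum_Ico_Ico_comm]; simp only [Finset.range_eq_Ico]
    _ = ∑ k ∈ Finset.range (m + 1),
        (m.choose k : ℝ) * Polynomial.aeval a (Polynomial.bernoulli k) * b ^ (m - k) := by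
        refine Finset.sum_congr rfl fun k hk => ?_
        rw [bernoulli_aeval_expand, Finset.mul_sum, Finset.sum_mul]
        refine Finset.sum_congr rfl fun i hi => ?_
        have hik : i ≤ k := Nat.lt_succ_iff.mp (Finset.mem_range.mp hi)
        have hkm : k ≤ m := Nat.lt_succ_iff.mp (Finset.mem_range.mp hk)
        have h := Nat.choose_mul (n := m) hik
        have h' : (m.choose k : ℝ) * (k.choose i : ℝ)
            = (m.choose i : ℝ) * ((m - i).choose (k - i) : ℝ) := by
          exact_mod_cast congrArg (Nat.cast : ℕ → ℝ) h
        linear_combination (-((_root_.bernoulli i : ℚ) : ℝ) * a ^ (k - i) * b ^ (m - k)) * h'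

theorem sum_even_range_aux (n : ℕ) (f : ℕ → ℝ) :
    ∑ j ∈ Finset.range (2 * n + 1), (if Even j then f j else 0)
      = ∑ i ∈ Finset.range (n + 1), f (2 * i) := by
  induction n with
  | zero => simp
  | succ n ih =>
    have h : 2 * (n + 1) + 1 = (2 * n + 1) + 1 + 1 := by ring
    rw [h, Finset.sum_range_succ, Finset.sum_range_succ, ih, Finset.sum_range_succ]
    have h1 : ¬ Even (2 * n + 1) := by simp [Nat.even_add_one]
    have h2 : Even (2 * n + 1 + 1) := by simp [Nat.even_add_one]
    rw [if_neg h1, if_pos h2]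
    have h3 : 2 * n + 1 + 1 = 2 * (n + 1) := by ring
    rw [h3, Finset.sum_range_succ, Finset.sum_range_succ]; ring

theorem bernoulli_even_sum (n : ℕ) (x y : ℝ) :
    ∑ k ∈ Finset.range (n + 1),
      ((2 * n).choose (2 * k) : ℝ) * (Polynomial.aeval x (Polynomial.bernoulli (2 * k))) *
        y ^ (2 * n - 2 * k)
    = (1 / 2) * (Polynomial.aeval (x + y) (Polynomial.bernoulli (2 * n)) +
        Polynomial.aeval (x - y) (Polynomial.bernoulli (2 * n))) := by
  have hxy : x - y = x + (-y) := by ring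
  rw [hxy, bernoulli_aeval_add, bernoulli_aeval_add, ← Finset.sum_add_distrib]
  have key : ∀ j ∈ Finset.range (2 * n + 1),
      ((2 * n).choose j : ℝ) * Polynomial.aeval x (Polynomial.bernoulli j) * y ^ (2 * n - j)
        + ((2 * n).choose j : ℝ) * Polynomial.aeval x (Polynomial.bernoulli j) * (-y) ^ (2 * n - j)
      = if Even j then
          2 * (((2 * n).choose j : ℝ) * Polynomial.aeval x (Polynomial.bernoulli j) * y ^ (2 * n - j))
        else 0 := by
    intro j hj
    have hjn : j ≤ 2 * n := Nat.lt_succ_iff.mp (Finset.mem_range.mp hj)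
    by_cases hje : Even j
    · have he : Even (2 * n - j) := by
        rcases hje with ⟨t, ht⟩; exact ⟨n - t, by omega⟩
      rw [if_pos hje, he.neg_pow]; ring
    · have ho : Odd (2 * n - j) := by
        rw [Nat.odd_sub hjn]; simp [Nat.even_mul, hje, parity_simps]
      rw [if_neg hje, ho.neg_pow]; ring
  rw [Finset.sum_congr rfl key, sum_even_range_aux]
  rw [Finset.mul_sum]
  refine (Finset.sum_congr rfl fun k _ => ?_).symm
  ring
end

section
/- For any nonnegative integer n, the sum over k from 0 to n of (2^{1-2k} - 1) * zeta(2k) * (pi*i)^{2n-2k} / (2n-2k)! equals zeta(2n), where zeta is the Riemann zeta function (with zeta(0) = -1/2). -/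
open Finset Real

section Aux
open PowerSeries

lemma key_ps :
    (2 * bernoulliPowerSeries ℚ - rescale 2 (bernoulliPowerSeries ℚ)) *
      (exp ℚ + evalNegHom (exp ℚ)) =
    2 * rescale 2 (bernoulliPowerSeries ℚ) + 2 * X := by
  set g := bernoulliPowerSeries ℚ with hg
  set E := exp ℚ with hE
  set E' := evalNegHom (exp ℚ) with hE'
  have h1 : g * (E - 1) = X := bernoulliPowerSeries_mul_exp_sub_one ℚ
  have h2 : rescale 2 g * (E ^ 2 - 1) = 2 * X := by
    have h := congrArg (rescale (2 : ℚ)) h1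
    rw [map_mul, map_sub, map_one, rescale_X] at h
    rw [hE, exp_pow_eq_rescale_exp, Nat.cast_ofNat, ← hE, h]
    simp [map_ofNat]
  have h3 : E * E' = 1 := exp_mul_exp_neg_eq_one
  have hc : ((E ^ 2 - 1) * E) ≠ 0 := by
    intro h
    rcases mul_eq_zero.mp h with h | h
    · have := congrArg (coeff 1) h
      rw [map_sub, exp_pow_eq_rescale_exp, coeff_rescale, coeff_exp] at this
      simp at this
    · have := congrArg (constantCoeff) h
      rw [constantCoeff_exp] at this
      simp at this
  apply mul_right_cancel₀ hc
  linear_combination (2*(E^3+E^2+E+1)) * h1 - (E^2+1+2*E) * h2 +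
    ((2*g - rescale 2 g)*(E^2-1)) * h3

lemma sum_even_aux (m : ℕ) (h : ℕ → ℚ) (h0 : ∀ j, Odd j → h j = 0) :
    ∑ j ∈ Finset.range (2 * m + 1), h j = ∑ k ∈ Finset.range (m + 1), h (2 * k) := by
  induction m with
  | zero => simp
  | succ m ih =>
    have e : 2 * (m + 1) + 1 = (2 * m + 1) + 1 + 1 := by ring
    rw [e, Finset.sum_range_succ, Finset.sum_range_succ, ih, h0 _ ⟨m, by ring⟩,
      Finset.sum_range_succ]
    have e2 : 2 * m + 1 + 1 = 2 * (m + 1) := by ring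
    rw [e2, Finset.sum_range_succ, Finset.sum_range_succ]; ring

lemma coeff_id (n : ℕ) :
    ∑ k ∈ Finset.range (n + 1),
      (2 - 4 ^ k : ℚ) * bernoulli (2 * k) / ((2 * k).factorial * (2 * (n - k)).factorial)
    = 4 ^ n * bernoulli (2 * n) / (2 * n).factorial := by
  have cfL : ∀ j, coeff j (2 * bernoulliPowerSeries ℚ - rescale 2 (bernoulliPowerSeries ℚ))
      = (2 - 2 ^ j) * bernoulli j / j.factorial := by
    intro j
    rw [show (2 : ℚ⟦X⟧) * bernoulliPowerSeries ℚ = C 2 * bernoulliPowerSeries ℚ by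
      rw [map_ofNat]]
    rw [map_sub, coeff_C_mul, coeff_rescale, bernoulliPowerSeries, coeff_mk]
    simp only [Algebra.algebraMap_self, RingHom.id_apply]
    ring
  have cfR : ∀ i, coeff i (exp ℚ + evalNegHom (exp ℚ)) = (1 + (-1) ^ i) / i.factorial := by
    intro i
    rw [map_add, evalNegHom, coeff_rescale, coeff_exp]
    simp only [Algebra.algebraMap_self, RingHom.id_apply]
    ring
  have H := congrArg (coeff (2 * n)) key_ps
  rw [coeff_mul, Finset.Nat.sum_antidiagonal_eq_sum_range_succ_mk] at H
  simp only [cfL, cfR] at H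
  rw [sum_even_aux n _ (fun j hj => by
    rcases Nat.lt_or_ge j 2 with h2 | h2
    · interval_cases j
      · exact absurd hj (by decide)
      · norm_num
    · rw [bernoulli_eq_bernoulli'_of_ne_one (by omega),
        bernoulli'_eq_zero_of_odd hj (by omega)]
      simp)] at H
  rw [map_add] at H
  rw [show (2 : ℚ⟦X⟧) * rescale 2 (bernoulliPowerSeries ℚ)
      = C 2 * rescale 2 (bernoulliPowerSeries ℚ) by rw [map_ofNat],
    show (2 : ℚ⟦X⟧) * X = C 2 * X by rw [map_ofNat],
    coeff_C_mul, coeff_C_mul, coeff_rescale, bernoulliPowerSeries, coeff_mk, coeff_X,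
    if_neg (by omega)] at H
  simp only [Algebra.algebraMap_self, RingHom.id_apply] at H
  -- now massage H into the goal
  have key : ∑ k ∈ Finset.range (n + 1),
      (2 - 2 ^ (2 * k)) * bernoulli (2 * k) / (2 * k).factorial
        * ((1 + (-1) ^ (2 * n - 2 * k)) / (2 * n - 2 * k).factorial)
      = 2 ^ (2 * n) * (bernoulli (2 * n) / (2 * n).factorial) * 2 := by
    rw [H]; ring
  calc ∑ k ∈ Finset.range (n + 1),
      (2 - 4 ^ k : ℚ) * bernoulli (2 * k) / ((2 * k).factorial * (2 * (n - k)).factorial)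
      = ∑ k ∈ Finset.range (n + 1),
        (1 / 2) * ((2 - 2 ^ (2 * k)) * bernoulli (2 * k) / (2 * k).factorial
          * ((1 + (-1) ^ (2 * n - 2 * k)) / (2 * n - 2 * k).factorial)) := by
        apply Finset.sum_congr rfl
        intro k hk
        have hkn : k ≤ n := by simpa using Nat.lt_succ_iff.mp (Finset.mem_range.mp hk)
        have h1 : 2 * n - 2 * k = 2 * (n - k) := by omega
        have h2 : (-1 : ℚ) ^ (2 * (n - k)) = 1 := by
          rw [pow_mul]; norm_num
        rw [h1, h2, show (4 : ℚ) ^ k = 2 ^ (2 * k) by rw [pow_mul]; norm_num]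
        have f1 : ((2 * k).factorial : ℚ) ≠ 0 := Nat.cast_ne_zero.mpr (Nat.factorial_ne_zero _)
        have f2 : ((2 * (n - k)).factorial : ℚ) ≠ 0 := Nat.cast_ne_zero.mpr (Nat.factorial_ne_zero _)
        field_simp
        ring
    _ = 4 ^ n * bernoulli (2 * n) / (2 * n).factorial := by
        rw [← Finset.mul_sum, key, show (4 : ℚ) ^ n = 2 ^ (2 * n) by rw [pow_mul]; norm_num]
        ring

end Aux

lemma zeta_formula (k : ℕ) :
    riemannZeta (2 * k) = -((Real.pi : ℂ) * Complex.I) ^ (2 * k) * 2 ^ (2 * k)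
      * (bernoulli (2 * k) : ℂ) / (2 * (2 * k).factorial) := by
  rcases eq_or_ne k 0 with rfl | hk
  · simp [riemannZeta_zero]
  · rw [riemannZeta_two_mul_nat hk]
    rw [mul_pow, show ((Complex.I) ^ (2 * k)) = (-1 : ℂ) ^ k by
      rw [pow_mul, Complex.I_sq]]
    have e : 2 * k = (2 * k - 1) + 1 := by omega
    rw [show ((2 : ℂ) ^ (2 * k)) = 2 ^ (2 * k - 1) * 2 by rw [e, pow_succ]; norm_num]
    ring

theorem zeta_even_sum (n : ℕ) :
    ∑ k ∈ Finset.range (n + 1),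
      ((2 : ℂ) ^ ((1 : ℤ) - 2 * k) - 1) * riemannZeta (2 * k) *
        ((Real.pi : ℂ) * Complex.I) ^ (2 * (n - k)) / (Nat.factorial (2 * (n - k)))
    = riemannZeta (2 * n) := by
  have step : ∀ k ∈ Finset.range (n + 1),
      ((2 : ℂ) ^ ((1 : ℤ) - 2 * k) - 1) * riemannZeta (2 * k) *
        ((Real.pi : ℂ) * Complex.I) ^ (2 * (n - k)) / (Nat.factorial (2 * (n - k)))
      = -((Real.pi : ℂ) * Complex.I) ^ (2 * n) / 2 *
          (((2 - 4 ^ k : ℚ) * bernoulli (2 * k) /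
            ((2 * k).factorial * (2 * (n - k)).factorial) : ℚ) : ℂ) := by
    intro k hk
    have hkn : k ≤ n := Nat.lt_succ_iff.mp (Finset.mem_range.mp hk)
    have hz : (2 : ℂ) ^ ((1 : ℤ) - 2 * k) = 2 / 2 ^ (2 * k) := by
      rw [zpow_sub₀ (by norm_num : (2 : ℂ) ≠ 0), zpow_one,
        show ((2 : ℤ) * k) = ((2 * k : ℕ) : ℤ) by push_cast; ring, zpow_natCast]
    rw [hz, zeta_formula k]
    have hpow : ((Real.pi : ℂ) * Complex.I) ^ (2 * k) *
        ((Real.pi : ℂ) * Complex.I) ^ (2 * (n - k)) =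
        ((Real.pi : ℂ) * Complex.I) ^ (2 * n) := by
      rw [← pow_add]; congr 1; omega
    have f1 : ((2 * k).factorial : ℂ) ≠ 0 := Nat.cast_ne_zero.mpr (Nat.factorial_ne_zero _)
    have f2 : ((2 * (n - k)).factorial : ℂ) ≠ 0 := Nat.cast_ne_zero.mpr (Nat.factorial_ne_zero _)
    have h2 : ((2 : ℂ) ^ (2 * k)) ≠ 0 := pow_ne_zero _ two_ne_zero
    have h4 : ((4 : ℚ) ^ k : ℂ) = 2 ^ (2 * k) := by push_cast; rw [pow_mul]; norm_num
    rw [← hpow]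
    push_cast
    rw [show ((4:ℂ) ^ k) = 2 ^ (2 * k) by rw [pow_mul]; norm_num]
    field_simp
  rw [Finset.sum_congr rfl step, ← Finset.mul_sum]
  rw [show ∑ k ∈ Finset.range (n + 1),
      (((2 - 4 ^ k : ℚ) * bernoulli (2 * k) /
        ((2 * k).factorial * (2 * (n - k)).factorial) : ℚ) : ℂ)
      = ((∑ k ∈ Finset.range (n + 1), ((2 - 4 ^ k : ℚ) * bernoulli (2 * k) /
        ((2 * k).factorial * (2 * (n - k)).factorial)) : ℚ) : ℂ) by push_cast; ring]
  rw [coeff_id n, zeta_formula n]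
  have f3 : ((2 * n).factorial : ℂ) ≠ 0 := Nat.cast_ne_zero.mpr (Nat.factorial_ne_zero _)
  have h4 : ((4 : ℂ) ^ n) = 2 ^ (2 * n) := by rw [pow_mul]; norm_num
  push_cast
  rw [h4]
  field_simp
end

section
/- For any nonnegative integer n, the sum over k from 0 to n of (2^{1-2k} - 1) * zeta(2k) * (pi*i)^{2n-2k} / (2n-2k+1)! equals -1/2 if n = 0 and 0 if n >= 1, where zeta is the Riemann zeta function (with zeta(0) = -1/2). -/
open Finset Real PowerSeries

private lemma expQ_sub_one_ne : exp ℚ - 1 ≠ 0 := by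
  intro h
  have := congrArg (PowerSeries.coeff 1) h
  simp [PowerSeries.coeff_exp] at this

private lemma keyB : bernoulliPowerSeries ℚ * (exp ℚ - 1) = X := bernoulliPowerSeries_mul_exp_sub_one ℚ

private lemma rescale_two_X : rescale (2:ℚ) X = 2 * X := by
  ext n
  rw [coeff_rescale, show (2:ℚ⟦X⟧) * X = C 2 * X by rw [map_ofNat], coeff_C_mul, coeff_X]
  split <;> simp_all

private lemma exp_sq : (exp ℚ) ^ 2 = rescale (2:ℚ) (exp ℚ) := by
  have := exp_pow_eq_rescale_exp (A := ℚ) 2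
  simpa using this

private lemma key1 : rescale (2:ℚ) (bernoulliPowerSeries ℚ) * (exp ℚ + 1)
    = 2 * bernoulliPowerSeries ℚ := by
  apply mul_right_cancel₀ expQ_sub_one_ne
  have h1 : rescale (2:ℚ) (bernoulliPowerSeries ℚ) * (rescale (2:ℚ) (exp ℚ) - 1)
      = rescale (2:ℚ) X := by
    rw [show (1 : ℚ⟦X⟧) = rescale (2:ℚ) 1 by rw [map_one], ← map_sub, ← map_mul, keyB]
  linear_combination (rescale (2:ℚ) (bernoulliPowerSeries ℚ)) * exp_sq + h1 + rescale_two_X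
    - 2 * keyB

private lemma key2 : bernoulliPowerSeries ℚ * exp ℚ = X + bernoulliPowerSeries ℚ := by
  apply mul_right_cancel₀ expQ_sub_one_ne
  linear_combination (exp ℚ) * keyB - keyB

private lemma key3 : (2 * bernoulliPowerSeries ℚ - rescale (2:ℚ) (bernoulliPowerSeries ℚ)) * exp ℚ
    = 2 * X + rescale (2:ℚ) (bernoulliPowerSeries ℚ) := by
  linear_combination 2 * key2 - key1

private lemma bernoulli_odd' (k : ℕ) (hk : 1 ≤ k) : bernoulli (2*k+1) = 0 := by
  rw [bernoulli_eq_bernoulli'_of_ne_one (by omega)]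
  exact bernoulli'_eq_zero_of_odd (Nat.odd_iff.mpr (by omega)) (by omega)

private lemma coeff_sum (n : ℕ) (hn : 1 ≤ n) :
    ∑ i ∈ range (2*n+2), (2 - 2^i) * bernoulli i / (Nat.factorial i : ℚ) * (1/(Nat.factorial (2*n+1-i) : ℚ)) = 0 := by
  have h := congrArg (PowerSeries.coeff (2*n+1)) key3
  rw [PowerSeries.coeff_mul, Finset.Nat.sum_antidiagonal_eq_sum_range_succ_mk] at h
  simp only [map_sub, map_add, show (2:ℚ⟦X⟧) = C 2 by rw [map_ofNat],
    coeff_C_mul, coeff_rescale, bernoulliPowerSeries, coeff_mk, coeff_exp, coeff_X,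
    Algebra.algebraMap_self, RingHom.id_apply, if_neg (show ¬(2*n+1 = 1) by omega)] at h
  rw [bernoulli_odd' n hn] at h
  calc ∑ i ∈ range (2*n+2), (2 - 2^i) * bernoulli i / (Nat.factorial i : ℚ) * (1/(Nat.factorial (2*n+1-i) : ℚ))
      = ∑ i ∈ range (2*n+1+1), (2 * (bernoulli i / (Nat.factorial i : ℚ)) - 2^i * (bernoulli i / (Nat.factorial i : ℚ))) * (1/(Nat.factorial (2*n+1-i) : ℚ)) := by
        apply Finset.sum_congr (by ring_nf) (fun i _ => by ring)
    _ = 0 := by rw [h]; ring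

private lemma sum_range_two_mul (m : ℕ) (f : ℕ → ℚ) :
    ∑ i ∈ range (2*m), f i = ∑ k ∈ range m, (f (2*k) + f (2*k+1)) := by
  induction m with
  | zero => simp
  | succ m ih =>
    rw [show 2*(m+1) = (2*m)+1+1 by ring, sum_range_succ, sum_range_succ, ih, sum_range_succ]
    abel

private lemma ratlem (n : ℕ) :
    ∑ k ∈ range (n+1), (2 - 4^k) * bernoulli (2*k)
      / ((Nat.factorial (2*k) : ℚ) * (Nat.factorial (2*(n-k)+1) : ℚ))
    = if n = 0 then 1 else 0 := by
  cases n with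
  | zero => norm_num [Nat.factorial]
  | succ m =>
    rw [if_neg (Nat.succ_ne_zero m)]
    have h := coeff_sum (m+1) (by omega)
    rw [show 2*(m+1)+2 = 2*(m+2) by ring, sum_range_two_mul] at h
    have hodd : ∀ k ∈ range (m+2),
        (2 - 2^(2*k+1)) * bernoulli (2*k+1) / (Nat.factorial (2*k+1) : ℚ)
          * (1/(Nat.factorial (2*(m+1)+1-(2*k+1)) : ℚ)) = 0 := by
      intro k _
      rcases Nat.eq_zero_or_pos k with rfl | hk
      · norm_num
      · rw [bernoulli_odd' k hk]; ring
    rw [Finset.sum_congr rfl (fun k hk => by rw [hodd k hk])] at h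
    simp only [add_zero] at h
    calc ∑ k ∈ range (m+1+1), (2 - 4^k) * bernoulli (2*k)
          / ((Nat.factorial (2*k) : ℚ) * (Nat.factorial (2*((m+1)-k)+1) : ℚ))
        = ∑ k ∈ range (m+2), (2 - 2^(2*k)) * bernoulli (2*k) / (Nat.factorial (2*k) : ℚ)
            * (1/(Nat.factorial (2*(m+1)+1-2*k) : ℚ)) := by
          refine Finset.sum_congr rfl (fun k hk => ?_)
          rw [mem_range] at hk
          rw [show 2*(m+1)+1-2*k = 2*((m+1)-k)+1 by omega, pow_mul]
          norm_num
          ring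
      _ = 0 := h

theorem zeta_odd_sum (n : ℕ) :
    ∑ k ∈ Finset.range (n + 1),
      ((2 : ℂ) ^ ((1 : ℤ) - 2 * k) - 1) * riemannZeta (2 * k) *
        ((Real.pi : ℂ) * Complex.I) ^ (2 * (n - k)) / (Nat.factorial (2 * (n - k) + 1))
    = if n = 0 then -1 / 2 else 0 := by
  have key : ∀ k ∈ Finset.range (n + 1),
      ((2 : ℂ) ^ ((1 : ℤ) - 2 * k) - 1) * riemannZeta (2 * k) *
        ((Real.pi : ℂ) * Complex.I) ^ (2 * (n - k)) / (Nat.factorial (2 * (n - k) + 1))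
      = (-(-1)^n * (Real.pi : ℂ)^(2*n) / 2) *
          (((2 - 4^k) * bernoulli (2*k)
            / ((Nat.factorial (2*k) : ℚ) * (Nat.factorial (2*(n-k)+1) : ℚ)) : ℚ) : ℂ) := by
    intro k hk
    rw [mem_range] at hk
    obtain ⟨d, rfl⟩ : ∃ d, n = k + d := ⟨n - k, by omega⟩
    rw [show k + d - k = d by omega]
    have hI : ((Real.pi : ℂ) * Complex.I) ^ (2*d) = (-1)^d * (Real.pi:ℂ)^(2*d) := by
      rw [pow_mul, mul_pow, Complex.I_sq, pow_mul]
      ring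
    cases k with
    | zero =>
      simp only [Nat.cast_zero, mul_zero]
      rw [riemannZeta_zero, hI]
      push_cast
      have h1 : ((2*d+1).factorial : ℂ) ≠ 0 := by exact_mod_cast (2*d+1).factorial_ne_zero
      field_simp
      simp only [bernoulli_zero, Rat.cast_one]
      ring
    | succ m =>
      have hz := riemannZeta_two_mul_nat (k := m+1) (Nat.succ_ne_zero m)
      rw [hz, hI]
      rw [show (1 : ℤ) - 2 * ((m+1 : ℕ) : ℤ) = -((2*m+1 : ℕ) : ℤ) by push_cast; ring,
        zpow_neg, zpow_natCast]
      rw [show 2*(m+1)-1 = 2*m+1 by omega]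
      have h1 : ((2*d+1).factorial : ℂ) ≠ 0 := by exact_mod_cast (2*d+1).factorial_ne_zero
      have h2 : ((2*(m+1)).factorial : ℂ) ≠ 0 := by exact_mod_cast (2*(m+1)).factorial_ne_zero
      have h3 : ((2:ℂ))^(2*m+1) ≠ 0 := pow_ne_zero _ two_ne_zero
      push_cast
      rw [show ((4:ℂ))^(m+1) = 2^(2*(m+1)) by
        rw [show (4:ℂ) = 2^2 by norm_num, ← pow_mul]]
      field_simp
      ring
  rw [Finset.sum_congr rfl key, ← Finset.mul_sum]
  rw [show ∑ k ∈ Finset.range (n+1), (((2 - 4^k) * bernoulli (2*k)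
      / ((Nat.factorial (2*k) : ℚ) * (Nat.factorial (2*(n-k)+1) : ℚ)) : ℚ) : ℂ)
    = ((∑ k ∈ Finset.range (n+1), ((2 - 4^k) * bernoulli (2*k)
      / ((Nat.factorial (2*k) : ℚ) * (Nat.factorial (2*(n-k)+1) : ℚ))) : ℚ) : ℂ) by push_cast; rfl]
  rw [ratlem]
  rcases Nat.eq_zero_or_pos n with rfl | hn
  · norm_num
  · rw [if_neg (by omega), if_neg (by omega)]
    push_cast
    ring
end
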